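/- arXiv:1712.01957 — 5 statements merged into one kernel-verified Lean document; each statement's English description precedes it below -/
import Mathlib

section
/- The map assigning to each permutation σ ∈ Sym((underline m) × (underline n) × (underline o)) its reduced matrix is a surjection onto M(mo, n, no, m). In particular, every (m·o)×(n·o) matrix over ℕ with all row sums n and all column sums m is the reduced matrix of some permutation of m×n×o. -/
/-- Fiber of `Sigma.fst` over `x` is equivalent to `γ x`. -/
def sigmaFstFiber {ι : Type*} (γ : ι → Type*) (x : ι) :
    {s : Σ i, γ i // s.1 = x} ≃ γ x where
  toFun s := cast (congrArg γ s.2) s.1.2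
  invFun g := ⟨⟨x, g⟩, rfl⟩
  left_inv := by rintro ⟨⟨i, g⟩, rfl⟩; rfl
  right_inv g := rfl

lemma exists_fiber_fn {ι : Type*} [Fintype ι] [DecidableEq ι] (c : ι → ℕ) {m : ℕ}
    (h : ∑ x, c x = m) :
    ∃ f : Fin m → ι, ∀ x, (Finset.univ.filter (fun a => f a = x)).card = c x := by
  have hc : Fintype.card (Σ x : ι, Fin (c x)) = m := by simp [h]
  let e := Fintype.equivFinOfCardEq hc
  refine ⟨fun a => (e.symm a).1, fun x => ?_⟩
  rw [← Fintype.card_subtype]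
  rw [Fintype.card_congr (e.symm.subtypeEquiv (q := fun s => s.1 = x) (fun a => Iff.rfl))]
  rw [Fintype.card_congr (sigmaFstFiber (fun i => Fin (c i)) x)]
  exact Fintype.card_fin _

/-- The reduced matrix of a permutation of `m × n × o`. -/
def reducedMatrix {m n o : ℕ} (σ : Equiv.Perm (Fin m × Fin n × Fin o)) :
    Matrix (Fin m × Fin o) (Fin n × Fin o) ℕ := fun ik jk =>
  (Finset.univ.filter
    (fun p : Fin m × Fin n => σ (p.1, jk.1, jk.2) = (ik.1, p.2, ik.2))).card

theorem stmt_3 (m n o : ℕ) (A : Matrix (Fin m × Fin o) (Fin n × Fin o) ℕ)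
    (hrow : ∀ ik, ∑ jk, A ik jk = n) (hcol : ∀ jk, ∑ ik, A ik jk = m) :
    ∃ σ : Equiv.Perm (Fin m × Fin n × Fin o), reducedMatrix σ = A := by
  have hg : ∀ jk : Fin n × Fin o, ∃ g : Fin m → Fin m × Fin o,
      ∀ ik, (Finset.univ.filter (fun a => g a = ik)).card = A ik jk :=
    fun jk => exists_fiber_fn _ (hcol jk)
  choose g hgspec using hg
  set G : Fin m × Fin n × Fin o → Fin m × Fin o := fun x => g (x.2.1, x.2.2) x.1 with hGdef
  -- fibers of G have size n
  have hfib : ∀ ik, Fintype.card {x // G x = ik} = n := by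
    intro ik
    have e1 : {x : Fin m × Fin n × Fin o // G x = ik} ≃
        Σ jk : Fin n × Fin o, {a : Fin m // g jk a = ik} :=
      { toFun := fun x => ⟨(x.1.2.1, x.1.2.2), ⟨x.1.1, x.2⟩⟩
        invFun := fun s => ⟨(s.2.1, s.1.1, s.1.2), s.2.2⟩
        left_inv := by rintro ⟨⟨i, j, k⟩, h⟩; rfl
        right_inv := by rintro ⟨⟨j, k⟩, ⟨i, h⟩⟩; rfl }
    rw [Fintype.card_congr e1, Fintype.card_sigma]
    calc ∑ jk : Fin n × Fin o, Fintype.card {a : Fin m // g jk a = ik}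
        = ∑ jk : Fin n × Fin o, A ik jk := by
          refine Finset.sum_congr rfl fun jk _ => ?_
          rw [Fintype.card_subtype]; exact hgspec jk ik
      _ = n := hrow ik
  let eFin : ∀ ik : Fin m × Fin o, {x // G x = ik} ≃ Fin n :=
    fun ik => Fintype.equivFinOfCardEq (hfib ik)
  let h2 : ((Fin m × Fin o) × Fin n) ≃ (Fin m × Fin n × Fin o) :=
    { toFun := fun x => (x.1.1, x.2, x.1.2)
      invFun := fun y => ((y.1, y.2.2), y.2.1)
      left_inv := fun _ => rfl
      right_inv := fun _ => rfl }
  let σ : Equiv.Perm (Fin m × Fin n × Fin o) :=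
    (Equiv.sigmaFiberEquiv G).symm.trans
      (((Equiv.sigmaCongrRight eFin).trans (Equiv.sigmaEquivProd _ _)).trans h2)
  have hσ : ∀ x, σ x = ((G x).1, eFin (G x) ⟨x, rfl⟩, (G x).2) := fun x => rfl
  refine ⟨σ, ?_⟩
  funext ik jk
  show (Finset.univ.filter
    (fun p : Fin m × Fin n => σ (p.1, jk.1, jk.2) = (ik.1, p.2, ik.2))).card = A ik jk
  rw [← hgspec jk ik]
  refine Finset.card_bij' (fun p _ => p.1) (fun a _ => (a, (σ (a, jk.1, jk.2)).2.1))
    ?_ ?_ ?_ ?_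
  · intro p hp
    simp only [Finset.mem_filter, Finset.mem_univ, true_and] at hp ⊢
    have h1 := hσ (p.1, jk.1, jk.2)
    rw [hp] at h1
    have : G (p.1, jk.1, jk.2) = ik := by
      have h1' := congrArg Prod.fst h1
      have h2' := congrArg (fun y => y.2.2) h1
      exact Prod.ext h1'.symm h2'.symm
    exact this
  · intro a ha
    simp only [Finset.mem_filter, Finset.mem_univ, true_and] at ha ⊢
    have hGa : G (a, jk.1, jk.2) = ik := ha
    have h1 := hσ (a, jk.1, jk.2)
    refine Prod.ext ?_ (Prod.ext rfl ?_)
    · show (σ (a, jk.1, jk.2)).1 = ik.1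
      rw [h1]; show (G (a, jk.1, jk.2)).1 = ik.1; rw [hGa]
    · show (σ (a, jk.1, jk.2)).2.2 = ik.2
      rw [h1]; show (G (a, jk.1, jk.2)).2 = ik.2; rw [hGa]
  · intro p hp
    simp only [Finset.mem_filter, Finset.mem_univ, true_and] at hp
    have : (σ (p.1, jk.1, jk.2)).2.1 = p.2 := by rw [hp]
    exact Prod.ext rfl this
  · intro a ha
    rfl
end

section
/- Let σ, π ∈ Sym((underline m) × (underline n) × (underline o)) with reduced matrices A and B respectively. Then σ and π lie in the same double coset of (Sym(m×o) wreath-acting-with Sym(n)) \ Sym(m×n×o) / (Sym(m) wreath Sym(n×o)) if and only if there exist permutations ρ₁ ∈ Sym(m×o) and ρ₂ ∈ Sym(n×o) with ρ₁ A ρ₂ = B (as permutation matrices acting on the reduced matrices). -/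
open Finset

/-- projection onto first and third coordinates -/
def proj13 {m n o : ℕ} (x : Fin m × Fin n × Fin o) : Fin m × Fin o := (x.1, x.2.2)

@[simp] lemma proj13_apply {m n o : ℕ} (x : Fin m × Fin n × Fin o) :
    proj13 x = (x.1, x.2.2) := rfl

/-- The reduced matrix entry counts, equivalently, the first coordinates whose image
lands in the right row. -/
lemma red_single {m n o : ℕ} (σ : Equiv.Perm (Fin m × Fin n × Fin o))
    (ik : Fin m × Fin o) (jk : Fin n × Fin o) :
    reducedMatrix σ ik jk =
      (Finset.univ.filter fun i : Fin m => proj13 (σ (i, jk.1, jk.2)) = ik).card := by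
  apply Finset.card_nbij' (fun p : Fin m × Fin n => p.1)
    (fun i : Fin m => (i, (σ (i, jk.1, jk.2)).2.1))
  · intro p hp
    simp only [Finset.mem_coe, mem_filter, mem_univ, true_and] at hp ⊢
    rw [hp]; simp
  · intro i hi
    simp only [Finset.mem_coe, mem_filter, mem_univ, true_and] at hi ⊢
    simp only [proj13_apply] at hi ⊢
    rw [← hi]
  · intro p hp
    simp only [Finset.mem_coe, mem_filter, mem_univ, true_and] at hp
    beta_reduce
    rw [hp]
  · intro i _
    rfl

/-- If two functions on a fintype have equal fiber cardinalities, they differ by a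
permutation of the domain. -/
lemma exists_perm_comp {α β : Type*} [Fintype α] [DecidableEq α] [DecidableEq β]
    (f g : α → β)
    (h : ∀ b, (Finset.univ.filter fun a => f a = b).card
        = (Finset.univ.filter fun a => g a = b).card) :
    ∃ e : Equiv.Perm α, ∀ a, f (e a) = g a := by
  have hcard : ∀ b : β, Fintype.card {a // g a = b} = Fintype.card {a // f a = b} := by
    intro b
    simp only [Fintype.card_subtype]
    exact (h b).symm
  let eb : ∀ b : β, {a // g a = b} ≃ {a // f a = b} := fun b =>
    Fintype.equivOfCardEq (hcard b)
  let φ : α → α := fun a => (eb (g a) ⟨a, rfl⟩ : α)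
  have hf : ∀ a, f (φ a) = g a := fun a => (eb (g a) ⟨a, rfl⟩).2
  have haux : ∀ (b : β) (x : α) (hx : g x = b), φ x = (eb b ⟨x, hx⟩ : α) := by
    intro b x hx; subst hx; rfl
  have hinj : Function.Injective φ := by
    intro a a' hφ
    have hg : g a = g a' := by rw [← hf a, ← hf a', hφ]
    have h1 : φ a' = (eb (g a) ⟨a', hg.symm⟩ : α) := haux (g a) a' hg.symm
    have h2 : eb (g a) ⟨a, rfl⟩ = eb (g a) ⟨a', hg.symm⟩ :=
      Subtype.ext (hφ.trans h1)
    have h3 := (eb (g a)).injective h2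
    exact congrArg Subtype.val h3
  exact ⟨Equiv.ofBijective φ (Finite.injective_iff_bijective.1 hinj), fun a => hf a⟩

theorem stmt_5 (m n o : ℕ) (σ π : Equiv.Perm (Fin m × Fin n × Fin o)) :
    (∃ h : Equiv.Perm (Fin m × Fin n × Fin o),
      (∃ (h₁ : Equiv.Perm (Fin m × Fin o)) (h₂ : Fin m × Fin o → Equiv.Perm (Fin n)),
        ∀ (i : Fin m) (j : Fin n) (k : Fin o),
          h (i, j, k) = ((h₁ (i, k)).1, h₂ (i, k) j, (h₁ (i, k)).2)) ∧
      ∃ g : Equiv.Perm (Fin m × Fin n × Fin o),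
        (∃ (g₂ : Equiv.Perm (Fin n × Fin o)) (g₁ : Fin n × Fin o → Equiv.Perm (Fin m)),
          ∀ (i : Fin m) (j : Fin n) (k : Fin o),
            g (i, j, k) = (g₁ (j, k) i, g₂ (j, k))) ∧
        π = h * σ * g) ↔
    (∃ (ρ₁ : Equiv.Perm (Fin m × Fin o)) (ρ₂ : Equiv.Perm (Fin n × Fin o)),
      ∀ ik jk, reducedMatrix σ (ρ₁ ik) (ρ₂ jk) = reducedMatrix π ik jk) := by
  constructor
  · rintro ⟨h, ⟨h₁, h₂, hh⟩, g, ⟨g₂, g₁, hg⟩, hπ⟩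
    subst hπ
    refine ⟨h₁⁻¹, g₂, fun ik jk => ?_⟩
    rw [red_single, red_single]
    have hprojh : ∀ x : Fin m × Fin n × Fin o, proj13 (h x) = h₁ (proj13 x) := by
      rintro ⟨a, b, c⟩
      rw [hh]
      simp
    refine (Finset.card_equiv (g₁ (jk.1, jk.2)) ?_).symm
    intro i
    simp only [mem_filter, mem_univ, true_and]
    have e1 : (h * σ * g) (i, jk.1, jk.2)
        = h (σ (g₁ (jk.1, jk.2) i, (g₂ jk).1, (g₂ jk).2)) := by
      simp [Equiv.Perm.mul_apply, hg i jk.1 jk.2]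
    rw [e1, hprojh]
    constructor
    · intro hx
      rw [← hx]
      simp
    · intro hx
      have := congrArg h₁ hx
      simpa using this
  · rintro ⟨ρ₁, ρ₂, HA⟩
    -- for each column choose a permutation matching the fibers
    have hcnt : ∀ jk : Fin n × Fin o, ∀ b : Fin m × Fin o,
        (Finset.univ.filter fun i : Fin m =>
            proj13 (σ (i, (ρ₂ jk).1, (ρ₂ jk).2)) = b).card
        = (Finset.univ.filter fun i : Fin m =>
            ρ₁ (proj13 (π (i, jk.1, jk.2))) = b).card := by
      intro jk b
      have h1 := HA (ρ₁.symm b) jk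
      rw [red_single, red_single] at h1
      have h2 : (Finset.univ.filter fun i : Fin m =>
          proj13 (π (i, jk.1, jk.2)) = ρ₁.symm b)
          = (Finset.univ.filter fun i : Fin m =>
          ρ₁ (proj13 (π (i, jk.1, jk.2))) = b) := by
        apply Finset.filter_congr
        intro i _
        simp [Equiv.apply_eq_iff_eq_symm_apply]
      rw [h2] at h1
      simpa using h1
    have hu : ∀ jk : Fin n × Fin o, ∃ e : Equiv.Perm (Fin m),
        ∀ i, proj13 (σ (e i, (ρ₂ jk).1, (ρ₂ jk).2))
          = ρ₁ (proj13 (π (i, jk.1, jk.2))) := by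
      intro jk
      exact exists_perm_comp _ _ (hcnt jk)
    choose u hu using hu
    -- build g
    let g : Equiv.Perm (Fin m × Fin n × Fin o) :=
      (Equiv.prodComm (Fin m) (Fin n × Fin o)).trans
        ((Equiv.prodShear ρ₂ u).trans (Equiv.prodComm (Fin n × Fin o) (Fin m)))
    have hgapp : ∀ (i : Fin m) (jk : Fin n × Fin o), g (i, jk) = (u jk i, ρ₂ jk) :=
      fun i jk => rfl
    have hgsymm : ∀ (a : Fin m) (jk' : Fin n × Fin o),
        g.symm (a, jk') = ((u (ρ₂.symm jk')).symm a, ρ₂.symm jk') := fun a jk' => rfl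
    let h : Equiv.Perm (Fin m × Fin n × Fin o) := π * g⁻¹ * σ⁻¹
    have hproj : ∀ x : Fin m × Fin n × Fin o, proj13 (h x) = ρ₁.symm (proj13 x) := by
      intro x
      have hx : h x = π (g.symm (σ.symm x)) := rfl
      set y := σ.symm x with hy
      have hσy : σ y = x := σ.apply_symm_apply x
      have hgs : g.symm y = ((u (ρ₂.symm y.2)).symm y.1, ρ₂.symm y.2) := by
        rw [show y = (y.1, y.2) from rfl]
        exact hgsymm y.1 y.2
      set jk₀ := ρ₂.symm y.2 with hjk₀
      set i₀ := (u jk₀).symm y.1 with hi₀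
      have key := hu jk₀ i₀
      have e1 : u jk₀ i₀ = y.1 := (u jk₀).apply_symm_apply y.1
      have e2 : ρ₂ jk₀ = y.2 := ρ₂.apply_symm_apply y.2
      rw [e1, e2] at key
      have e3 : (y.1, y.2.1, y.2.2) = y := by simp
      rw [e3, hσy] at key
      -- key : proj13 x = ρ₁ (proj13 (π (i₀, jk₀.1, jk₀.2)))
      have e4 : (i₀, jk₀.1, jk₀.2) = ((i₀, jk₀) : Fin m × Fin n × Fin o) := by simp
      rw [e4] at key
      rw [hx, hgs, key, Equiv.symm_apply_apply]
    have hbij : ∀ ac : Fin m × Fin o,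
        Function.Bijective (fun b : Fin n => (h (ac.1, b, ac.2)).2.1) := by
      intro ac
      rw [← Finite.injective_iff_bijective]
      intro b b' hbb
      have p1 := hproj (ac.1, b, ac.2)
      have p2 := hproj (ac.1, b', ac.2)
      simp only [proj13_apply] at p1 p2
      have : h (ac.1, b, ac.2) = h (ac.1, b', ac.2) := by
        have q := p1.trans p2.symm
        rw [Prod.ext_iff] at q
        exact Prod.ext q.1 (Prod.ext hbb q.2)
      have := h.injective this
      exact (Prod.ext_iff.1 (Prod.ext_iff.1 this).2).1
    refine ⟨h, ⟨ρ₁⁻¹, fun ac => Equiv.ofBijective _ (hbij ac), ?_⟩,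
      g, ⟨ρ₂, u, fun i j k => rfl⟩, by show π = π * g⁻¹ * σ⁻¹ * σ * g; group⟩
    intro i j k
    have hp := hproj (i, j, k)
    simp only [proj13_apply] at hp
    have h1 : (h (i, j, k)).1 = ((ρ₁⁻¹ (i, k)).1) := by
      rw [show (ρ₁⁻¹ : Equiv.Perm (Fin m × Fin o)) (i, k) = ρ₁.symm (i, k) from rfl,
        ← hp]
    have h3 : (h (i, j, k)).2.2 = ((ρ₁⁻¹ (i, k)).2) := by
      rw [show (ρ₁⁻¹ : Equiv.Perm (Fin m × Fin o)) (i, k) = ρ₁.symm (i, k) from rfl,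
        ← hp]
    refine Prod.ext h1 (Prod.ext ?_ h3)
    simp [Equiv.ofBijective_apply]
end

section
/- Let ρ ∈ Sym(m×n×o) be a permutation lying in the subgroup Sym(m) ≀ Sym(n×o), written in coordinates as ρ(i,j,k) = (ρ₁(i,j,k), ρ₂(j,k)) with ρ₂ ∈ Sym(n×o) and ρ₁(·,j,k) ∈ Sym(m) for each fixed (j,k). Then for any σ ∈ Sym(m×n×o) with reduced matrix A, the reduced matrix of σ∘ρ is A·ρ₂, i.e. the matrix obtained from A by permuting its columns (indexed by n×o) according to ρ₂. -/
theorem stmt_6 (m n o : ℕ) (σ ρ : Equiv.Perm (Fin m × Fin n × Fin o))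
    (ρ₂ : Equiv.Perm (Fin n × Fin o)) (ρ₁ : Fin n × Fin o → Equiv.Perm (Fin m))
    (hρ : ∀ (i : Fin m) (j : Fin n) (k : Fin o), ρ (i, j, k) = (ρ₁ (j, k) i, ρ₂ (j, k))) :
    ∀ ik jk, reducedMatrix (σ * ρ) ik jk = reducedMatrix σ ik (ρ₂ jk) := by
  intro ik jk
  unfold reducedMatrix
  apply Finset.card_bij (fun p _ => ((ρ₁ (jk.1, jk.2) p.1 : Fin m), p.2))
  · intro p hp
    simp only [Finset.mem_filter, Finset.mem_univ, true_and] at hp ⊢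
    simp only [Equiv.Perm.mul_apply, hρ] at hp
    convert hp using 2
  · intro p hp q hq h
    simp only [Prod.mk.injEq] at h
    exact Prod.ext (by exact (ρ₁ (jk.1, jk.2)).injective h.1) h.2
  · intro p hp
    simp only [Finset.mem_filter, Finset.mem_univ, true_and] at hp
    refine ⟨((ρ₁ (jk.1, jk.2)).symm p.1, p.2), ?_, ?_⟩
    · simp only [Finset.mem_filter, Finset.mem_univ, true_and, Equiv.Perm.mul_apply, hρ,
        Equiv.apply_symm_apply]
      convert hp using 2
    · simp
end

section
/- For every n ≥ 2, the number of congruence classes of matrices in M(2, n, n, 2) equals ⌊n/2⌋ + 1, where two 2×n matrices A, B over ℕ are congruent if there are permutation matrices ρ₁ ∈ Sym(2), ρ₂ ∈ Sym(n) with ρ₁ A ρ₂ = B. -/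
open Finset

lemma sum_pattern {n k m : ℕ} (hk : k ≤ m) (hm : m ≤ n) (x y z : ℕ) :
    ∑ j : Fin n, (if (j:ℕ) < k then x else if (j:ℕ) < m then y else z)
      = k*x + (m-k)*y + (n-m)*z := by
  rw [Fin.sum_univ_eq_sum_range (fun i => if i < k then x else if i < m then y else z)]
  rw [Finset.range_eq_Ico, ← Finset.sum_Ico_consecutive _ (Nat.zero_le k) (hk.trans hm),
    ← Finset.sum_Ico_consecutive _ hk hm]
  have h1 : ∀ i ∈ Finset.Ico 0 k, (if i < k then x else if i < m then y else z) = x :=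
    fun i hi => by rw [Finset.mem_Ico] at hi; rw [if_pos hi.2]
  have h2 : ∀ i ∈ Finset.Ico k m, (if i < k then x else if i < m then y else z) = y :=
    fun i hi => by rw [Finset.mem_Ico] at hi; rw [if_neg (by omega), if_pos hi.2]
  have h3 : ∀ i ∈ Finset.Ico m n, (if i < k then x else if i < m then y else z) = z :=
    fun i hi => by rw [Finset.mem_Ico] at hi; rw [if_neg (by omega), if_neg (by omega)]
  rw [Finset.sum_congr rfl h1, Finset.sum_congr rfl h2, Finset.sum_congr rfl h3,
    Finset.sum_const, Finset.sum_const, Finset.sum_const]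
  simp [Nat.card_Ico, mul_comm]
  ring

lemma sum_count {n : ℕ} (h : Fin n → ℕ) (hle : ∀ j, h j ≤ 2) :
    ∑ j, h j = 2 * (univ.filter (fun j => h j = 2)).card + (univ.filter (fun j => h j = 1)).card := by
  rw [Finset.card_filter, Finset.card_filter, Finset.mul_sum, ← Finset.sum_add_distrib]
  refine Finset.sum_congr rfl fun j _ => ?_
  have := hle j
  split_ifs <;> omega

lemma card_filter_perm {n : ℕ} (σ : Equiv.Perm (Fin n)) (p : Fin n → Prop) [DecidablePred p] :
    (univ.filter (fun j => p (σ j))).card = (univ.filter p).card :=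
  Finset.card_bij (fun j _ => σ j) (by simp) (fun a _ b _ h => σ.injective h)
    (fun b hb => ⟨σ.symm b, by simpa using hb, by simp⟩)

lemma exists_perm {n : ℕ} (g₁ g₂ : Fin n → ℕ)
    (h : ∀ v, (univ.filter (fun j => g₁ j = v)).card = (univ.filter (fun j => g₂ j = v)).card) :
    ∃ σ : Equiv.Perm (Fin n), ∀ j, g₁ (σ j) = g₂ j := by
  have e : ∀ v, {j // g₂ j = v} ≃ {j // g₁ j = v} := fun v =>
    Fintype.equivOfCardEq (by rw [Fintype.card_subtype, Fintype.card_subtype]; exact (h v).symm)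
  refine ⟨(Equiv.sigmaFiberEquiv g₂).symm.trans ((Equiv.sigmaCongrRight e).trans (Equiv.sigmaFiberEquiv g₁)), fun j => ?_⟩
  exact ((e (g₂ j)) ⟨j, rfl⟩).2

lemma card_lt {n k : ℕ} (hk : k ≤ n) : (univ.filter (fun j : Fin n => (j:ℕ) < k)).card = k := by
  rw [Finset.card_filter, Fin.sum_univ_eq_sum_range (fun i => if i < k then 1 else 0)]
  rw [← Finset.card_filter]
  rw [Finset.range_eq_Ico, Finset.Ico_filter_lt_of_le_right hk]
  simp

abbrev MS (n : ℕ) := {M : Matrix (Fin 2) (Fin n) ℕ //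
    (∀ i, ∑ j, M i j = n) ∧ (∀ j, ∑ i, M i j = 2)}

abbrev mrel (n : ℕ) (A B : MS n) : Prop :=
  ∃ (ρ₁ : Equiv.Perm (Fin 2)) (ρ₂ : Equiv.Perm (Fin n)),
    ∀ i j, A.1 (ρ₁ i) (ρ₂ j) = B.1 i j

lemma col2 {n : ℕ} (M : MS n) (j : Fin n) : M.1 0 j + M.1 1 j = 2 := by
  have := M.2.2 j; rwa [Fin.sum_univ_two] at this

/-- the count of columns with top entry v -/
def cnt {n : ℕ} (M : MS n) (v : ℕ) : ℕ := (univ.filter (fun j => M.1 0 j = v)).card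

lemma cnt_key {n : ℕ} (M : MS n) : 2 * cnt M 2 + cnt M 1 = n := by
  have := sum_count (M.1 0) (fun j => by have := col2 M j; omega)
  rw [M.2.1 0] at this
  exact this.symm

lemma cnt_bot {n : ℕ} (M : MS n) :
    (univ.filter (fun j => M.1 1 j = 2)).card = cnt M 2 := by
  have h1 := sum_count (M.1 1) (fun j => by have := col2 M j; omega)
  rw [M.2.1 1] at h1
  have h2 : (univ.filter (fun j => M.1 1 j = 1)).card = cnt M 1 := by
    unfold cnt
    congr 1
    exact Finset.filter_congr (fun j _ => by have := col2 M j; constructor <;> intro <;> omega)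
  have h3 := cnt_key M
  omega

lemma cnt_zero_eq {n : ℕ} (M : MS n) : cnt M 0 = cnt M 2 := by
  rw [← cnt_bot M]
  unfold cnt
  congr 1
  exact Finset.filter_congr (fun j _ => by have := col2 M j; constructor <;> intro <;> omega)

lemma cnt_le {n : ℕ} (M : MS n) : cnt M 2 ≤ n / 2 := by
  have := cnt_key M
  omega

lemma invar {n : ℕ} (A B : MS n) (h : mrel n A B) : cnt A 2 = cnt B 2 := by
  obtain ⟨ρ₁, ρ₂, h⟩ := h
  have hB : cnt B 2 = (univ.filter (fun j => A.1 (ρ₁ 0) (ρ₂ j) = 2)).card := by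
    unfold cnt
    congr 1
    exact Finset.filter_congr (fun j _ => by rw [h 0 j])
  rw [hB, card_filter_perm ρ₂ (fun j => A.1 (ρ₁ 0) j = 2)]
  have : ρ₁ 0 = 0 ∨ ρ₁ 0 = 1 := by
    rcases ρ₁ 0 with ⟨_ | _ | v, hv⟩
    · exact Or.inl rfl
    · exact Or.inr rfl
    · omega
  rcases this with h0 | h0 <;> rw [h0]
  · rfl
  · exact (cnt_bot A).symm

lemma inj_step {n : ℕ} (A B : MS n) (h : cnt A 2 = cnt B 2) : mrel n A B := by
  have key : ∀ v, (univ.filter (fun j => A.1 0 j = v)).card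
      = (univ.filter (fun j => B.1 0 j = v)).card := by
    intro v
    match v with
    | 0 => exact (cnt_zero_eq A).trans (h.trans (cnt_zero_eq B).symm)
    | 1 => have := cnt_key A; have := cnt_key B; unfold cnt at *; omega
    | 2 => exact h
    | (v+3) =>
      rw [Finset.filter_false_of_mem, Finset.filter_false_of_mem]
      · intro j _; have := col2 B j; omega
      · intro j _; have := col2 A j; omega
  obtain ⟨σ, hσ⟩ := exists_perm (A.1 0) (B.1 0) key
  refine ⟨1, σ, fun i j => ?_⟩
  simp only [Equiv.Perm.one_apply]
  fin_cases i
  · exact hσ j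
  · show A.1 1 (σ j) = B.1 1 j
    have h1 := col2 A (σ j); have h2 := col2 B j; have := hσ j
    omega

lemma surj_step {n : ℕ} (hn : 2 ≤ n) (k : ℕ) (hk : k ≤ n / 2) :
    ∃ M : MS n, cnt M 2 = k := by
  have hk2 : 2 * k ≤ n := by omega
  have hkm : k ≤ n - k := by omega
  have hmn : n - k ≤ n := by omega
  refine ⟨⟨fun i j => if i = 0 then (if (j:ℕ) < k then 2 else if (j:ℕ) < n - k then 1 else 0)
    else (if (j:ℕ) < k then 0 else if (j:ℕ) < n - k then 1 else 2), ?_, ?_⟩, ?_⟩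
  · intro i
    fin_cases i
    · simp only [Fin.mk_zero, if_pos rfl, if_true]
      rw [sum_pattern hkm hmn 2 1 0]
      omega
    · simp only [Fin.mk_one, if_neg (by decide : ¬ ((1 : Fin 2) = 0)), if_false]
      rw [sum_pattern hkm hmn 0 1 2]
      omega
  · intro j
    rw [Fin.sum_univ_two]
    simp only [if_pos rfl, if_neg (by decide : ¬ ((1 : Fin 2) = 0))]
    split_ifs <;> omega
  · unfold cnt
    simp only [if_pos rfl, if_true]
    have : (univ.filter (fun j : Fin n =>
        (if (j:ℕ) < k then 2 else if (j:ℕ) < n - k then 1 else 0) = 2))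
        = univ.filter (fun j : Fin n => (j:ℕ) < k) := by
      refine Finset.filter_congr (fun j _ => ?_)
      split_ifs with h1 h2 <;> simp_all
    rw [this, card_lt (by omega : k ≤ n)]

theorem stmt_12' (n : ℕ) (hn : 2 ≤ n) : Nat.card (Quot (mrel n)) = n / 2 + 1 := by
  have hb : Function.Bijective (Quot.lift (fun M : MS n => (⟨cnt M 2, by
        have := cnt_le M; omega⟩ : Fin (n/2+1)))
      (fun A B h => by simpa [Fin.ext_iff] using invar A B h) :
      Quot (mrel n) → Fin (n/2+1)) := by
    constructor
    · intro x y
      induction x using Quot.ind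
      induction y using Quot.ind
      intro h
      simp [Fin.ext_iff] at h
      exact Quot.sound (inj_step _ _ h)
    · intro k
      obtain ⟨M, hM⟩ := surj_step hn k.1 (by omega)
      exact ⟨Quot.mk _ M, by simp [Fin.ext_iff, hM]⟩
  rw [Nat.card_eq_of_bijective _ hb, Nat.card_eq_fintype_card, Fintype.card_fin]

theorem stmt_12 (n : ℕ) (hn : 2 ≤ n) :
    Nat.card (Quot (fun (A B : {M : Matrix (Fin 2) (Fin n) ℕ //
        (∀ i, ∑ j, M i j = n) ∧ (∀ j, ∑ i, M i j = 2)}) =>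
      ∃ (ρ₁ : Equiv.Perm (Fin 2)) (ρ₂ : Equiv.Perm (Fin n)),
        ∀ i j, A.1 (ρ₁ i) (ρ₂ j) = B.1 i j)) = n / 2 + 1 := stmt_12' n hn
end

section
/- For every o ≥ 1, the number of congruence classes of matrices in M(2o, 2, 2o, 2) equals p(2o), the number of partitions of 2o. Here two (2o)×(2o) matrices A, B over ℕ are congruent if there exist permutation matrices ρ₁, ρ₂ ∈ Sym(2o) with ρ₁ A ρ₂ = B or ρ₁ Aᵗ ρ₂ = B. -/
namespace Stmt15Aux
open Equiv Equiv.Perm Finset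

lemma dichotomy {n : ℕ} {σ τ σ' τ' : Perm (Fin n)}
    (H : ∀ i j, (if σ i = j then (1:ℕ) else 0) + (if τ i = j then 1 else 0)
              = (if σ' i = j then 1 else 0) + (if τ' i = j then 1 else 0)) (i : Fin n) :
    (σ' i = σ i ∧ τ' i = τ i) ∨ (σ' i = τ i ∧ τ' i = σ i) := by
  have d3 : σ' i = σ i ∨ τ' i = σ i := by
    by_contra hcon; push_neg at hcon
    have h := H i (σ i)
    rw [if_pos rfl, if_neg hcon.1, if_neg hcon.2] at h
    split_ifs at h <;> omega
  have d4 : σ' i = τ i ∨ τ' i = τ i := by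
    by_contra hcon; push_neg at hcon
    have h := H i (τ i)
    rw [if_neg hcon.1, if_neg hcon.2] at h
    split_ifs at h <;> omega
  have d2 : σ i = τ' i ∨ τ i = τ' i := by
    by_contra hcon; push_neg at hcon
    have h := H i (τ' i)
    rw [if_neg hcon.1, if_neg hcon.2, if_pos rfl] at h
    split_ifs at h <;> omega
  have d1 : σ i = σ' i ∨ τ i = σ' i := by
    by_contra hcon; push_neg at hcon
    have h := H i (σ' i)
    rw [if_neg hcon.1, if_neg hcon.2, if_pos rfl] at h
    split_ifs at h <;> omega
  rcases d3 with h3 | h3 <;> rcases d4 with h4 | h4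
  · have hst : σ i = τ i := h3.symm.trans h4
    refine Or.inl ⟨h3, ?_⟩
    rcases d2 with h2 | h2
    · exact (h2.symm.trans hst)
    · exact h2.symm
  · exact Or.inl ⟨h3, h4⟩
  · exact Or.inr ⟨h4, h3⟩
  · have hst : σ i = τ i := by
      have := h3.symm.trans h4; exact this
    refine Or.inl ⟨?_, h4⟩
    rcases d1 with h1 | h1
    · exact h1.symm
    · exact h1.symm.trans hst.symm

theorem _root_.Equiv.Perm.apply_inv_self {α : Type*} (f : Perm α) (x : α) : f (f⁻¹ x) = x :=
  f.apply_symm_apply x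

lemma cycleType_invariant {n : ℕ} {σ τ σ' τ' : Perm (Fin n)}
    (H : ∀ i j, (if σ i = j then (1:ℕ) else 0) + (if τ i = j then 1 else 0)
              = (if σ' i = j then 1 else 0) + (if τ' i = j then 1 else 0)) :
    (σ⁻¹ * τ).cycleType = (σ'⁻¹ * τ').cycleType := by
  classical
  set p : Fin n → Prop := fun i => σ' i = τ i ∧ σ i ≠ τ i with hp
  set c : Perm (Fin n) := σ⁻¹ * τ with hcdef
  have hcapp : ∀ x, c x = σ⁻¹ (τ x) := fun x => rfl
  have fac2 : ∀ m, p m → σ' m = τ m ∧ τ' m = σ m := by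
    intro m hm
    rcases dichotomy H m with ⟨hs, ht⟩ | h2
    · exact absurd (hs.symm.trans hm.1) hm.2
    · exact h2
  have fac1 : ∀ m, ¬ p m → σ' m = σ m ∧ τ' m = τ m := by
    intro m hm
    rcases dichotomy H m with h1 | ⟨hs, ht⟩
    · exact h1
    · have hst : σ m = τ m := by
        by_contra hne; exact hm ⟨hs, hne⟩
      exact ⟨hs.trans hst.symm, ht.trans hst⟩
  have hiff : ∀ x, p x ↔ p (c x) := by
    intro x
    constructor
    · rintro ⟨hpx, hne⟩
      have hσcx : σ (c x) = τ x := by rw [hcapp]; exact σ.apply_inv_self (τ x)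
      have hxcx : c x ≠ x := by
        intro h; apply hne; rw [← hσcx, h]
      rcases dichotomy H (c x) with ⟨hs, ht⟩ | ⟨hs, ht⟩
      · exfalso; apply hxcx; apply σ'.injective
        rw [hs, hσcx, hpx]
      · refine ⟨hs, ?_⟩
        intro hce
        apply hxcx; apply σ'.injective
        rw [hs, ← hce, hσcx, hpx]
    · intro hcx
      by_contra hx
      have h1 := fac1 x hx
      have h2 := fac2 (c x) hcx
      have hσcx : σ (c x) = τ x := by rw [hcapp]; exact σ.apply_inv_self (τ x)
      have : τ' (c x) = τ' x := by rw [h2.2, hσcx, h1.2]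
      have hxe : c x = x := τ'.injective this
      apply hcx.2
      rw [hxe] at hσcx ⊢
      exact hσcx.symm ▸ rfl
  have hiff' : ∀ x, (¬ p x) ↔ ¬ p (c x) := fun x => not_congr (hiff x)
  set c₁ : Perm (Fin n) := ofSubtype (c.subtypePerm (fun x => (hiff x).symm)) with hc1
  set c₂ : Perm (Fin n) := ofSubtype (c.subtypePerm (p := fun x => ¬ p x) (fun x => (hiff' x).symm)) with hc2
  have hc1mem : ∀ x, p x → c₁ x = c x := fun x hx => ofSubtype_subtypePerm_of_mem (fun x => (hiff x).symm) hx
  have hc1nmem : ∀ x, ¬ p x → c₁ x = x := fun x hx => ofSubtype_subtypePerm_of_not_mem (fun x => (hiff x).symm) hx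
  have hc2mem : ∀ x, ¬ p x → c₂ x = c x := fun x hx => ofSubtype_subtypePerm_of_mem (p := fun x => ¬ p x) (fun x => (hiff' x).symm) hx
  have hc2nmem : ∀ x, p x → c₂ x = x := fun x hx => ofSubtype_subtypePerm_of_not_mem (p := fun x => ¬ p x) (fun x => (hiff' x).symm) (not_not_intro hx)
  have hmul : c₁ * c₂ = c := by
    ext x
    by_cases hx : p x
    · rw [mul_apply, hc2nmem x hx, hc1mem x hx]
    · rw [mul_apply, hc2mem x hx, hc1nmem _ ((hiff' x).mp hx)]
  have hdisj : Disjoint c₁ c₂ := by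
    intro x
    by_cases hx : p x
    · exact Or.inr (hc2nmem x hx)
    · exact Or.inl (hc1nmem x hx)
  have hc1invmem : ∀ x, p x → c₁⁻¹ x = c⁻¹ x := by
    intro x hx
    rw [inv_eq_iff_eq]
    have hpcix : p (c⁻¹ x) := by
      have := (hiff (c⁻¹ x)); rw [c.apply_inv_self] at this; exact this.mpr hx
    rw [hc1mem _ hpcix, c.apply_inv_self]
  have hc1invnmem : ∀ x, ¬ p x → c₁⁻¹ x = x := by
    intro x hx
    rw [inv_eq_iff_eq, hc1nmem x hx]
  have hmain : σ'⁻¹ * τ' = c₁⁻¹ * c₂ := by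
    refine Equiv.ext fun x => ?_
    rw [mul_apply, mul_apply, inv_eq_iff_eq]
    by_cases hx : p x
    · rw [hc2nmem x hx, hc1invmem x hx]
      have hpcx : p (c⁻¹ x) := by
        have := (hiff (c⁻¹ x)); rw [c.apply_inv_self] at this; exact this.mpr hx
      have : σ' (c⁻¹ x) = τ (c⁻¹ x) := (fac2 _ hpcx).1
      rw [(fac2 x hx).2, this]
      have : c⁻¹ x = τ⁻¹ (σ x) := by rw [hcdef]; simp [mul_apply]
      rw [this, τ.apply_inv_self]
    · rw [hc2mem x hx, hc1invnmem _ ((hiff' x).mp hx)]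
      have hncx : ¬ p (c x) := (hiff' x).mp hx
      rw [(fac1 x hx).2, (fac1 _ hncx).1, hcapp, σ.apply_inv_self]
  have hdisj' : Disjoint c₁⁻¹ c₂ := by
    intro x
    rcases hdisj x with h | h
    · left; rw [inv_eq_iff_eq, h]
    · right; exact h
  rw [hmain, hdisj'.cycleType_mul, cycleType_inv, ← hdisj.cycleType_mul, hmul]

lemma perm_of_sums_one {n : ℕ} (M : Matrix (Fin n) (Fin n) ℕ)
    (hr : ∀ i, ∑ j, M i j = 1) (hc : ∀ j, ∑ i, M i j = 1) :
    ∃ σ : Perm (Fin n), ∀ i j, M i j = if σ i = j then 1 else 0 := by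
  classical
  have hex : ∀ i, ∃ j, M i j ≠ 0 := by
    intro i
    by_contra h
    push_neg at h
    have := hr i
    rw [Finset.sum_eq_zero (fun j _ => h j)] at this
    exact one_ne_zero this.symm
  choose f hf using hex
  have hfe : ∀ i, M i (f i) = 1 := by
    intro i
    have h1 : M i (f i) ≤ 1 := (hr i) ▸ Finset.single_le_sum (fun j _ => Nat.zero_le _) (mem_univ _)
    have h2 := hf i
    omega
  have hzero : ∀ i j, j ≠ f i → M i j = 0 := by
    intro i j hj
    have hsub : ({f i, j} : Finset (Fin n)) ⊆ univ := subset_univ _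
    have hle : ∑ k ∈ ({f i, j} : Finset (Fin n)), M i k ≤ 1 :=
      (hr i) ▸ Finset.sum_le_sum_of_subset hsub
    rw [Finset.sum_pair (Ne.symm hj)] at hle
    have := hfe i
    omega
  have hinj : Function.Injective f := by
    intro a b hab
    by_contra hne
    have hsub : ({a, b} : Finset (Fin n)) ⊆ univ := subset_univ _
    have hle : ∑ k ∈ ({a, b} : Finset (Fin n)), M k (f a) ≤ 1 :=
      (hc (f a)) ▸ Finset.sum_le_sum_of_subset hsub
    rw [Finset.sum_pair hne] at hle
    have h1 := hfe a
    have h2 := hfe b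
    rw [← hab] at h2
    omega
  refine ⟨Equiv.ofBijective f (Finite.injective_iff_bijective.mp hinj), fun i j => ?_⟩
  by_cases h : f i = j
  · simp only [Equiv.ofBijective_apply, h, if_pos]
    rw [← h]; exact hfe i
  · simp only [Equiv.ofBijective_apply, h, if_neg]
    exact hzero i j (fun hj => h hj.symm)

lemma sum_ite_perm {n : ℕ} (σ : Perm (Fin n)) (i : Fin n) :
    ∑ j, (if σ i = j then (1:ℕ) else 0) = 1 := by
  simp

lemma sum_ite_perm_col {n : ℕ} (σ : Perm (Fin n)) (j : Fin n) :
    ∑ i, (if σ i = j then (1:ℕ) else 0) = 1 := by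
  rw [Finset.sum_eq_single (σ⁻¹ j)]
  · simp
  · intro b _ hb
    rw [if_neg]
    intro h
    exact hb (by rw [← h]; simp)
  · intro h; exact absurd (mem_univ _) h

lemma decomp {n : ℕ} (M : Matrix (Fin n) (Fin n) ℕ)
    (hr : ∀ i, ∑ j, M i j = 2) (hc : ∀ j, ∑ i, M i j = 2) :
    ∃ σ τ : Perm (Fin n), ∀ i j,
      M i j = (if σ i = j then 1 else 0) + (if τ i = j then 1 else 0) := by
  classical
  set t : Fin n → Finset (Fin n) := fun i => univ.filter (fun j => M i j ≠ 0) with ht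
  have hall : ∀ s : Finset (Fin n), s.card ≤ (s.biUnion t).card := by
    intro s
    have h1 : ∑ i ∈ s, ∑ j, M i j = 2 * s.card := by
      rw [Finset.sum_congr rfl (fun i _ => hr i)]; ring_nf; simp [mul_comm]
    have h2 : ∀ i ∈ s, ∑ j, M i j = ∑ j ∈ s.biUnion t, M i j := by
      intro i hi
      rw [← Finset.sum_subset (Finset.subset_univ (s.biUnion t))]
      intro j _ hj
      by_contra hne
      exact hj (Finset.mem_biUnion.mpr ⟨i, hi, Finset.mem_filter.mpr ⟨mem_univ _, hne⟩⟩)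
    have h3 : 2 * s.card = ∑ j ∈ s.biUnion t, ∑ i ∈ s, M i j := by
      rw [← h1, Finset.sum_congr rfl h2, Finset.sum_comm]
    have h4 : ∑ j ∈ s.biUnion t, ∑ i ∈ s, M i j ≤ ∑ j ∈ s.biUnion t, 2 := by
      refine Finset.sum_le_sum fun j _ => ?_
      rw [← hc j]
      exact Finset.sum_le_sum_of_subset (subset_univ s)
    rw [Finset.sum_const, smul_eq_mul] at h4
    omega
  obtain ⟨f, hfinj, hft⟩ := (Finset.all_card_le_biUnion_card_iff_exists_injective t).mp hall
  have hfne : ∀ i, M i (f i) ≠ 0 := fun i => (Finset.mem_filter.mp (hft i)).2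
  set σ : Perm (Fin n) := Equiv.ofBijective f (Finite.injective_iff_bijective.mp hfinj) with hσ
  have hσf : ∀ i, σ i = f i := fun i => rfl
  set N : Matrix (Fin n) (Fin n) ℕ := fun i j => M i j - (if σ i = j then 1 else 0) with hN
  have hM : ∀ i j, M i j = N i j + (if σ i = j then 1 else 0) := by
    intro i j
    by_cases h : σ i = j
    · have := hfne i
      rw [hσf] at h
      subst h
      simp [hN, hσf]
      omega
    · simp [hN, h]
  have hNr : ∀ i, ∑ j, N i j = 1 := by
    intro i
    have := hr i
    rw [Finset.sum_congr rfl (fun j _ => hM i j), Finset.sum_add_distrib, sum_ite_perm] at this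
    omega
  have hNc : ∀ j, ∑ i, N i j = 1 := by
    intro j
    have := hc j
    rw [Finset.sum_congr rfl (fun i _ => hM i j), Finset.sum_add_distrib, sum_ite_perm_col] at this
    omega
  obtain ⟨τ, hτ⟩ := perm_of_sums_one N hNr hNc
  exact ⟨σ, τ, fun i j => by rw [hM i j, hτ i j]; ring⟩

/-- partition of `n` attached to a permutation of `Fin n` -/
def mypart {n : ℕ} (c : Perm (Fin n)) : Nat.Partition n where
  parts := c.cycleType + Multiset.replicate (n - c.cycleType.sum) 1
  parts_pos := by
    intro a ha
    rcases Multiset.mem_add.mp ha with h | h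
    · exact lt_of_lt_of_le zero_lt_two (two_le_of_mem_cycleType h)
    · rw [Multiset.eq_of_mem_replicate h]; exact zero_lt_one
  parts_sum := by
    have hle : c.cycleType.sum ≤ n := by
      rw [sum_cycleType]
      simpa using Finset.card_le_univ c.support
    rw [Multiset.sum_add, Multiset.sum_replicate, smul_eq_mul, mul_one]
    omega

lemma mypart_cycleType {n : ℕ} {c c' : Perm (Fin n)}
    (h : c.cycleType = c'.cycleType) : mypart c = mypart c' := by
  have : (mypart c).parts = (mypart c').parts := by
    simp only [mypart, h]
  exact Nat.Partition.ext this

lemma cycleType_of_mypart {n : ℕ} {c c' : Perm (Fin n)}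
    (h : mypart c = mypart c') : c.cycleType = c'.cycleType := by
  have hp : (mypart c).parts = (mypart c').parts := by rw [h]
  have hf : ∀ (d : Perm (Fin n)), (mypart d).parts.filter (fun a => 2 ≤ a) = d.cycleType := by
    intro d
    simp only [mypart]
    rw [Multiset.filter_add, Multiset.filter_eq_self.2 fun _ h => two_le_of_mem_cycleType h,
      Multiset.filter_eq_nil.2 fun a h => ?_, add_zero]
    rw [Multiset.eq_of_mem_replicate h]
    omega
  rw [← hf c, ← hf c', hp]
lemma conj_cycleType {n : ℕ} (g θ : Perm (Fin n)) :
    (θ⁻¹ * g * θ).cycleType = g.cycleType := by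
  have := cycleType_conj (σ := g) (τ := θ⁻¹)
  rwa [inv_inv] at this

lemma ite_perm_shift {n : ℕ} {g h ρ₁ ρ₂ : Perm (Fin n)} (hgh : ρ₂⁻¹ * g * ρ₁ = h)
    (i j : Fin n) : (if g (ρ₁ i) = ρ₂ j then (1:ℕ) else 0) = (if h i = j then 1 else 0) := by
  rw [← hgh]
  exact if_congr (by simp [mul_apply, inv_eq_iff_eq, Equiv.symm_apply_eq]) rfl rfl

noncomputable def dsig {n : ℕ} (M : Matrix (Fin n) (Fin n) ℕ)
    (hr : ∀ i, ∑ j, M i j = 2) (hc : ∀ j, ∑ i, M i j = 2) : Perm (Fin n) :=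
  (decomp M hr hc).choose

noncomputable def dtau {n : ℕ} (M : Matrix (Fin n) (Fin n) ℕ)
    (hr : ∀ i, ∑ j, M i j = 2) (hc : ∀ j, ∑ i, M i j = 2) : Perm (Fin n) :=
  (decomp M hr hc).choose_spec.choose

lemma dspec {n : ℕ} (M : Matrix (Fin n) (Fin n) ℕ)
    (hr : ∀ i, ∑ j, M i j = 2) (hc : ∀ j, ∑ i, M i j = 2) :
    ∀ i j, M i j = (if dsig M hr hc i = j then 1 else 0) + (if dtau M hr hc i = j then 1 else 0) :=
  (decomp M hr hc).choose_spec.choose_spec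

lemma main_count (n : ℕ) :
    Nat.card (Quot (fun (A B : {M : Matrix (Fin n) (Fin n) ℕ //
        (∀ i, ∑ j, M i j = 2) ∧ (∀ j, ∑ i, M i j = 2)}) =>
      ∃ (ρ₁ ρ₂ : Equiv.Perm (Fin n)),
        (∀ i j, A.1 (ρ₁ i) (ρ₂ j) = B.1 i j) ∨
        (∀ i j, A.1 (ρ₂ j) (ρ₁ i) = B.1 i j)))
      = Fintype.card (Nat.Partition n) := by
  classical
  set T := {M : Matrix (Fin n) (Fin n) ℕ //
      (∀ i, ∑ j, M i j = 2) ∧ (∀ j, ∑ i, M i j = 2)} with hT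
  set r : T → T → Prop := fun A B =>
      ∃ (ρ₁ ρ₂ : Equiv.Perm (Fin n)),
        (∀ i j, A.1 (ρ₁ i) (ρ₂ j) = B.1 i j) ∨
        (∀ i j, A.1 (ρ₂ j) (ρ₁ i) = B.1 i j) with hr
  set f : T → Nat.Partition n :=
    fun A => mypart ((dsig A.1 A.2.1 A.2.2)⁻¹ * dtau A.1 A.2.1 A.2.2) with hf
  have hresp : ∀ A B : T, r A B → f A = f B := by
    rintro A B ⟨ρ₁, ρ₂, h | h⟩
    · set σ := dsig A.1 A.2.1 A.2.2
      set τ := dtau A.1 A.2.1 A.2.2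
      set σ' := dsig B.1 B.2.1 B.2.2
      set τ' := dtau B.1 B.2.1 B.2.2
      have H : ∀ i j, (if (ρ₂⁻¹ * σ * ρ₁) i = j then (1:ℕ) else 0)
            + (if (ρ₂⁻¹ * τ * ρ₁) i = j then 1 else 0)
          = (if σ' i = j then 1 else 0) + (if τ' i = j then 1 else 0) := by
        intro i j
        rw [← ite_perm_shift (rfl : ρ₂⁻¹ * σ * ρ₁ = ρ₂⁻¹ * σ * ρ₁) i j,
          ← ite_perm_shift (rfl : ρ₂⁻¹ * τ * ρ₁ = ρ₂⁻¹ * τ * ρ₁) i j,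
          ← dspec A.1 A.2.1 A.2.2 (ρ₁ i) (ρ₂ j), h i j, dspec B.1 B.2.1 B.2.2 i j]
      have hct := cycleType_invariant H
      have hgrp : (ρ₂⁻¹ * σ * ρ₁)⁻¹ * (ρ₂⁻¹ * τ * ρ₁) = ρ₁⁻¹ * (σ⁻¹ * τ) * ρ₁ := by group
      rw [hgrp, conj_cycleType] at hct
      exact mypart_cycleType hct
    · set σ := dsig A.1 A.2.1 A.2.2
      set τ := dtau A.1 A.2.1 A.2.2
      set σ' := dsig B.1 B.2.1 B.2.2
      set τ' := dtau B.1 B.2.1 B.2.2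
      have H : ∀ i j, (if (ρ₂⁻¹ * σ⁻¹ * ρ₁) i = j then (1:ℕ) else 0)
            + (if (ρ₂⁻¹ * τ⁻¹ * ρ₁) i = j then 1 else 0)
          = (if σ' i = j then 1 else 0) + (if τ' i = j then 1 else 0) := by
        intro i j
        have e1 : ((ρ₂⁻¹ * σ⁻¹ * ρ₁) i = j) = (σ (ρ₂ j) = ρ₁ i) := by
          simp only [mul_apply, eq_iff_iff]
          rw [inv_eq_iff_eq, inv_eq_iff_eq, eq_comm]
        have e2 : ((ρ₂⁻¹ * τ⁻¹ * ρ₁) i = j) = (τ (ρ₂ j) = ρ₁ i) := by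
          simp only [mul_apply, eq_iff_iff]
          rw [inv_eq_iff_eq, inv_eq_iff_eq, eq_comm]
        have L1 : (if (ρ₂⁻¹ * σ⁻¹ * ρ₁) i = j then (1:ℕ) else 0)
            = (if σ (ρ₂ j) = ρ₁ i then 1 else 0) := if_congr (iff_of_eq e1) rfl rfl
        have L2 : (if (ρ₂⁻¹ * τ⁻¹ * ρ₁) i = j then (1:ℕ) else 0)
            = (if τ (ρ₂ j) = ρ₁ i then 1 else 0) := if_congr (iff_of_eq e2) rfl rfl
        rw [L1, L2, ← dspec A.1 A.2.1 A.2.2 (ρ₂ j) (ρ₁ i), h i j, dspec B.1 B.2.1 B.2.2 i j]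
      have hct := cycleType_invariant H
      have hgrp : (ρ₂⁻¹ * σ⁻¹ * ρ₁)⁻¹ * (ρ₂⁻¹ * τ⁻¹ * ρ₁) = ρ₁⁻¹ * (σ * τ⁻¹) * ρ₁ := by group
      rw [hgrp, conj_cycleType] at hct
      have hfix : (σ * τ⁻¹).cycleType = (σ⁻¹ * τ).cycleType := by
        have h1 : (σ⁻¹ * τ)⁻¹ = τ⁻¹ * σ := by group
        rw [← cycleType_inv (σ⁻¹ * τ), h1]
        have h2 : σ * τ⁻¹ = σ * (τ⁻¹ * σ) * σ⁻¹ := by group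
        rw [h2, cycleType_conj]
      rw [hfix] at hct
      exact mypart_cycleType hct
  set F : Quot r → Nat.Partition n := Quot.lift f hresp with hF
  have hinj : Function.Injective F := by
    intro qa qb
    induction qa using Quot.ind with | _ A =>
    induction qb using Quot.ind with | _ B =>
    intro hab
    have hfab : f A = f B := hab
    have hct : ((dsig A.1 A.2.1 A.2.2)⁻¹ * dtau A.1 A.2.1 A.2.2).cycleType
        = ((dsig B.1 B.2.1 B.2.2)⁻¹ * dtau B.1 B.2.1 B.2.2).cycleType :=
      cycleType_of_mypart hfab
    set σA := dsig A.1 A.2.1 A.2.2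
    set τA := dtau A.1 A.2.1 A.2.2
    set σB := dsig B.1 B.2.1 B.2.2
    set τB := dtau B.1 B.2.1 B.2.2
    obtain ⟨θ, hθ⟩ := isConj_iff.mp (isConj_of_cycleType_eq hct)
    set ρ₁ : Perm (Fin n) := θ⁻¹ with hρ₁
    set ρ₂ : Perm (Fin n) := σA * θ⁻¹ * σB⁻¹ with hρ₂
    have hperm1 : ρ₂⁻¹ * σA * ρ₁ = σB := by rw [hρ₁, hρ₂]; group
    have hperm2 : ρ₂⁻¹ * τA * ρ₁ = τB := by
      have key : θ * (σA⁻¹ * τA) * θ⁻¹ = σB⁻¹ * τB := hθ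
      calc ρ₂⁻¹ * τA * ρ₁ = σB * (θ * (σA⁻¹ * τA) * θ⁻¹) := by rw [hρ₁, hρ₂]; group
      _ = σB * (σB⁻¹ * τB) := by rw [key]
      _ = τB := by group
    apply Quot.sound
    refine ⟨ρ₁, ρ₂, Or.inl fun i j => ?_⟩
    rw [dspec A.1 A.2.1 A.2.2 (ρ₁ i) (ρ₂ j), dspec B.1 B.2.1 B.2.2 i j,
      ite_perm_shift hperm1 i j, ite_perm_shift hperm2 i j]
  have hsurj : Function.Surjective F := by
    intro μ
    set m := μ.parts.filter (fun a => 2 ≤ a) with hm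
    set rm := μ.parts.filter (fun a => ¬ 2 ≤ a) with hrm
    have hsplit : m + rm = μ.parts := Multiset.filter_add_not _ _
    have hrm1 : ∀ a ∈ rm, a = 1 := by
      intro a ha
      have h1 := μ.parts_pos (Multiset.mem_of_mem_filter ha)
      have h2 := (Multiset.mem_filter.mp ha).2
      omega
    have hrmrep : rm = Multiset.replicate rm.card 1 :=
      Multiset.eq_replicate_card.mpr hrm1
    have hsum : m.sum + rm.card = n := by
      have := congrArg Multiset.sum hsplit
      rw [Multiset.sum_add, μ.parts_sum] at this
      rw [hrmrep, Multiset.sum_replicate, smul_eq_mul, mul_one] at this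
      exact this
    obtain ⟨g, hg⟩ : ∃ g : Perm (Fin n), g.cycleType = m := by
      rw [Equiv.Perm.exists_with_cycleType_iff]
      constructor
      · rw [Fintype.card_fin]; omega
      · exact fun a ha => (Multiset.mem_filter.mp ha).2
    have hrowsum : ∀ i, ∑ j, ((if (1 : Perm (Fin n)) i = j then (1:ℕ) else 0)
        + (if g i = j then 1 else 0)) = 2 := by
      intro i
      rw [Finset.sum_add_distrib, sum_ite_perm, sum_ite_perm]
    have hcolsum : ∀ j, ∑ i, ((if (1 : Perm (Fin n)) i = j then (1:ℕ) else 0)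
        + (if g i = j then 1 else 0)) = 2 := by
      intro j
      rw [Finset.sum_add_distrib, sum_ite_perm_col, sum_ite_perm_col]
    set A : T := ⟨fun i j => (if (1 : Perm (Fin n)) i = j then (1:ℕ) else 0)
        + (if g i = j then 1 else 0), hrowsum, hcolsum⟩ with hA
    refine ⟨Quot.mk r A, ?_⟩
    have hFA : F (Quot.mk r A) = mypart ((dsig A.1 A.2.1 A.2.2)⁻¹ * dtau A.1 A.2.1 A.2.2) := rfl
    rw [hFA]
    have H : ∀ i j, (if dsig A.1 A.2.1 A.2.2 i = j then (1:ℕ) else 0)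
          + (if dtau A.1 A.2.1 A.2.2 i = j then 1 else 0)
        = (if (1 : Perm (Fin n)) i = j then 1 else 0) + (if g i = j then 1 else 0) := by
      intro i j
      rw [← dspec A.1 A.2.1 A.2.2 i j]
    have hct := cycleType_invariant H
    have : mypart ((dsig A.1 A.2.1 A.2.2)⁻¹ * dtau A.1 A.2.1 A.2.2)
        = mypart ((1 : Perm (Fin n))⁻¹ * g) := mypart_cycleType hct
    rw [this]
    have hg1 : (1 : Perm (Fin n))⁻¹ * g = g := by group
    rw [hg1]
    -- mypart g = μ
    apply Nat.Partition.ext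
    show g.cycleType + Multiset.replicate (n - g.cycleType.sum) 1 = μ.parts
    rw [hg, ← hsplit, hrmrep]
    congr 1
    congr 1
    omega
  rw [Nat.card_eq_of_bijective F ⟨hinj, hsurj⟩, Nat.card_eq_fintype_card]

end Stmt15Aux

theorem stmt_15 (o : ℕ) (ho : 1 ≤ o) :
    Nat.card (Quot (fun (A B : {M : Matrix (Fin (2 * o)) (Fin (2 * o)) ℕ //
        (∀ i, ∑ j, M i j = 2) ∧ (∀ j, ∑ i, M i j = 2)}) =>
      ∃ (ρ₁ ρ₂ : Equiv.Perm (Fin (2 * o))),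
        (∀ i j, A.1 (ρ₁ i) (ρ₂ j) = B.1 i j) ∨
        (∀ i j, A.1 (ρ₂ j) (ρ₁ i) = B.1 i j)))
      = Fintype.card (Nat.Partition (2 * o)) := by
  exact Stmt15Aux.main_count (2 * o)
end
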